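/- Let d ≥ 3 and let ψ, φ ∈ EuclideanSpace ℂ (Fin d) be unit vectors with ⟪φ, ψ⟫ ≠ 0 (nonorthogonal) and ‖⟪φ, ψ⟫‖² ≤ (d−1)/d. Then there exist unitary operators U_j (j ∈ Fin d) on EuclideanSpace ℂ (Fin d) and an orthonormal basis (b_j)_{j ∈ Fin d} such that U_j ψ = ψ for every j and ⟪b_j, U_j φ⟫ = 0 for every j; that is, every U_j leaves ψ invariant, and the family of states {U_j φ} is antidistinguished by the projective measurement in the basis (b_j). -/

import Mathlib

open Finset in
lemma sum_pow_eq_zero' {d : ℕ} {z : ℂ} (hz : z ^ d = 1) (h1 : z ≠ 1) :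
    ∑ k : Fin d, z ^ (k : ℕ) = 0 := by
  rw [Fin.sum_univ_eq_sum_range, geom_sum_eq h1, hz]
  simp

lemma exists_onb_ext {d : ℕ} (hd : 3 ≤ d) {x y : EuclideanSpace ℂ (Fin d)}
    (hx : ‖x‖ = 1) (hy : ‖y‖ = 1) (hxy : (inner ℂ x y : ℂ) = 0) :
    ∃ B : OrthonormalBasis (Fin d) ℂ (EuclideanSpace ℂ (Fin d)),
      B ⟨0, by omega⟩ = x ∧ B ⟨1, by omega⟩ = y := by
  classical
  set k0 : Fin d := ⟨0, by omega⟩ with hk0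
  set k1 : Fin d := ⟨1, by omega⟩ with hk1
  have h01 : k0 ≠ k1 := by simp [hk0, hk1, Fin.ext_iff]
  set v : Fin d → EuclideanSpace ℂ (Fin d) := fun i => if i = k0 then x else y with hv
  have hyx : (inner ℂ y x : ℂ) = 0 := by rw [← inner_conj_symm, hxy, map_zero]
  have hxx : (inner ℂ x x : ℂ) = 1 := by
    rw [inner_self_eq_norm_sq_to_K, hx]; norm_num
  have hyy : (inner ℂ y y : ℂ) = 1 := by
    rw [inner_self_eq_norm_sq_to_K, hy]; norm_num
  have horth : Orthonormal ℂ (({k0, k1} : Set (Fin d)).restrict v) := by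
    rw [orthonormal_iff_ite]
    rintro ⟨i, hi⟩ ⟨j, hj⟩
    simp only [Set.mem_insert_iff, Set.mem_singleton_iff] at hi hj
    rcases hi with rfl | rfl <;> rcases hj with rfl | rfl <;>
      simp [hv, Subtype.ext_iff, h01, h01.symm, hxx, hyy, hxy, hyx, Set.restrict, hx, hy]
  obtain ⟨B, hB⟩ := horth.exists_orthonormalBasis_extension_of_card_eq (by simp)
  refine ⟨B, ?_, ?_⟩
  · have := hB k0 (by simp); simpa [hv] using this
  · have := hB k1 (by simp); simpa [hv, h01.symm] using this

open Finset in
lemma fourier_orthonormal {d : ℕ} (hd : 3 ≤ d) {ζ : ℂ} (hζ : IsPrimitiveRoot ζ d)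
    (B : OrthonormalBasis (Fin d) ℂ (EuclideanSpace ℂ (Fin d))) :
    Orthonormal ℂ (fun j : Fin d =>
      ∑ k : Fin d, (((Real.sqrt d : ℝ) : ℂ)⁻¹ * ζ ^ (j.val * k.val)) • B k) := by
  classical
  have hd0 : d ≠ 0 := by omega
  have hζ1 : ζ ^ d = 1 := hζ.pow_eq_one
  have hζ0 : ζ ≠ 0 := by
    intro h; rw [h, zero_pow hd0] at hζ1; exact zero_ne_one hζ1
  have hnorm : ‖ζ‖ = 1 := by
    have h : ‖ζ‖ ^ d = 1 := by rw [← norm_pow, hζ1, norm_one]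
    rcases (pow_eq_one_iff_cases.mp h) with h' | h' | h'
    · omega
    · exact h'
    · nlinarith [norm_nonneg ζ, h'.1]
  have hconj : ∀ n : ℕ, (starRingEnd ℂ) (ζ ^ n) = (ζ ^ n)⁻¹ := fun n =>
    (Complex.inv_eq_conj (by rw [norm_pow, hnorm, one_pow])).symm
  have hsq : (((Real.sqrt d : ℝ) : ℂ))⁻¹ * (((Real.sqrt d : ℝ) : ℂ))⁻¹ = ((d : ℝ) : ℂ)⁻¹ := by
    rw [← mul_inv]
    norm_cast
    rw [Real.mul_self_sqrt (by positivity)]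
  rw [orthonormal_iff_ite]
  intro j j'
  rw [B.orthonormal.inner_sum]
  set z : ℂ := (ζ ^ (j : ℕ))⁻¹ * ζ ^ ((j' : Fin d) : ℕ) with hz
  have hterm : ∀ k : Fin d,
      (starRingEnd ℂ) ((((Real.sqrt d : ℝ) : ℂ))⁻¹ * ζ ^ ((j : ℕ) * (k : ℕ))) *
        ((((Real.sqrt d : ℝ) : ℂ))⁻¹ * ζ ^ ((j' : ℕ) * (k : ℕ)))
        = ((d : ℝ) : ℂ)⁻¹ * z ^ (k : ℕ) := by
    intro k
    have h2 : (ζ ^ ((j : ℕ) * (k : ℕ)))⁻¹ * ζ ^ ((j' : ℕ) * (k : ℕ)) = z ^ (k : ℕ) := by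
      rw [hz, pow_mul, pow_mul, ← inv_pow, ← mul_pow]
    rw [map_mul, hconj, map_inv₀, Complex.conj_ofReal, ← h2, ← hsq]
    ring
  rw [Finset.sum_congr rfl (fun k _ => hterm k), ← Finset.mul_sum]
  by_cases hjj : j = j'
  · subst hjj
    have hz1 : z = 1 := by rw [hz]; exact inv_mul_cancel₀ (pow_ne_zero _ hζ0)
    simp only [hz1, one_pow, Finset.sum_const, card_univ, Fintype.card_fin, nsmul_eq_mul,
      mul_one, if_pos rfl]
    push_cast
    exact inv_mul_cancel₀ (Nat.cast_ne_zero.mpr hd0)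
  · have h1 : (ζ ^ (j : ℕ)) ^ d = 1 := by
      rw [← pow_mul, mul_comm, pow_mul, hζ1, one_pow]
    have h1' : (ζ ^ ((j' : Fin d) : ℕ)) ^ d = 1 := by
      rw [← pow_mul, mul_comm, pow_mul, hζ1, one_pow]
    have hzd : z ^ d = 1 := by
      rw [hz, mul_pow, inv_pow, h1, h1', inv_one, one_mul]
    have hz1 : z ≠ 1 := by
      intro h
      rw [hz] at h
      exact hjj (Fin.ext (hζ.pow_inj j.isLt j'.isLt
        ((inv_mul_eq_one₀ (pow_ne_zero _ hζ0)).mp h)))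
    rw [sum_pow_eq_zero' hzd hz1, mul_zero, if_neg hjj]

lemma norm_sq_sum_smul {d : ℕ} (B : OrthonormalBasis (Fin d) ℂ (EuclideanSpace ℂ (Fin d)))
    (c : Fin d → ℂ) :
    ‖∑ k : Fin d, c k • B k‖ ^ 2 = ∑ k : Fin d, ‖c k‖ ^ 2 := by
  have h2 : (inner ℂ (∑ k : Fin d, c k • B k) (∑ k : Fin d, c k • B k) : ℂ)
      = ((∑ k : Fin d, ‖c k‖ ^ 2 : ℝ) : ℂ) := by
    rw [B.orthonormal.inner_sum]
    push_cast
    exact Finset.sum_congr rfl fun k _ => RCLike.conj_mul (c k)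
  rw [inner_self_eq_norm_sq_to_K] at h2
  exact Complex.ofReal_injective (by push_cast at h2 ⊢; exact h2)

set_option maxHeartbeats 1600000

/-- Let `d ≥ 3` and let `ψ, φ` be nonorthogonal unit vectors in `ℂ^d` with
`‖⟪φ, ψ⟫‖² ≤ (d−1)/d`.  Then there are unitaries `U_j` (`j ∈ Fin d`) fixing `ψ` and an
orthonormal basis `(b_j)` such that `⟪b_j, U_j φ⟫ = 0` for every `j`; i.e. the states
`U_j φ` are antidistinguished by the projective measurement in the basis `(b_j)`. -/
theorem stmt12 (d : ℕ) (hd : 3 ≤ d) (ψ φ : EuclideanSpace ℂ (Fin d))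
    (hψ : ‖ψ‖ = 1) (hφ : ‖φ‖ = 1)
    (hne : (inner ℂ φ ψ : ℂ) ≠ 0)
    (hle : ‖(inner ℂ φ ψ : ℂ)‖ ^ 2 ≤ ((d : ℝ) - 1) / d) :
    ∃ (U : Fin d → (EuclideanSpace ℂ (Fin d) ≃ₗᵢ[ℂ] EuclideanSpace ℂ (Fin d)))
      (b : OrthonormalBasis (Fin d) ℂ (EuclideanSpace ℂ (Fin d))),
      (∀ j, U j ψ = ψ) ∧ ∀ j, (inner ℂ (b j) (U j φ) : ℂ) = 0 := by
  classical
  have hd0 : (0 : ℝ) < d := by exact_mod_cast (by omega : 0 < d)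
  have hd1 : (1 : ℝ) < d := by exact_mod_cast (by omega : 1 < d)
  have hd1' : (0 : ℝ) < (d : ℝ) - 1 := by linarith
  set k0 : Fin d := ⟨0, by omega⟩ with hk0
  set k1 : Fin d := ⟨1, by omega⟩ with hk1
  set k2 : Fin d := ⟨2, by omega⟩ with hk2
  have h01 : k0 ≠ k1 := by simp [hk0, hk1, Fin.ext_iff]
  have h02 : k0 ≠ k2 := by simp [hk0, hk2, Fin.ext_iff]
  have h12 : k1 ≠ k2 := by simp [hk1, hk2, Fin.ext_iff]
  set a : ℂ := inner ℂ ψ φ with ha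
  have ha' : a = (starRingEnd ℂ) (inner ℂ φ ψ : ℂ) := by rw [ha, ← inner_conj_symm]
  have hanorm : ‖a‖ = ‖(inner ℂ φ ψ : ℂ)‖ := by rw [ha']; exact RCLike.norm_conj _
  have ha0 : a ≠ 0 := by
    rw [ha']; simp only [ne_eq, map_eq_zero]; exact hne
  have hA2 : ‖a‖ ^ 2 ≤ ((d : ℝ) - 1) / d := by rw [hanorm]; exact hle
  have hA1 : ‖a‖ ^ 2 < 1 := lt_of_le_of_lt hA2 (by rw [div_lt_one hd0]; linarith)
  -- decomposition of φ
  set v : EuclideanSpace ℂ (Fin d) := φ - a • ψ with hv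
  have hψv : (inner ℂ ψ v : ℂ) = 0 := by
    rw [hv, inner_sub_right, inner_smul_right, inner_self_eq_norm_sq_to_K, hψ, ← ha]
    simp
  set r : ℝ := ‖v‖ with hr
  have hdecomp : φ = a • ψ + v := by rw [hv]; abel
  have hr2 : r ^ 2 = 1 - ‖a‖ ^ 2 := by
    have horth : (inner ℂ (a • ψ) v : ℂ) = 0 := by rw [inner_smul_left, hψv, mul_zero]
    have hpyth := norm_add_sq (𝕜 := ℂ) (a • ψ) v
    rw [← hdecomp, horth] at hpyth
    simp only [hφ, norm_smul, hψ, mul_one, map_zero, mul_zero, add_zero, one_pow] at hpyth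
    rw [hr]; linarith
  have hrpos : 0 < r := by nlinarith [norm_nonneg v, hA1]
  have hrC : ((r : ℝ) : ℂ) ≠ 0 := Complex.ofReal_ne_zero.mpr hrpos.ne'
  set e1 : EuclideanSpace ℂ (Fin d) := ((r : ℝ) : ℂ)⁻¹ • v with he1
  have he1norm : ‖e1‖ = 1 := by
    rw [he1, norm_smul, norm_inv, Complex.norm_real, Real.norm_eq_abs, abs_of_pos hrpos, ← hr,
      inv_mul_cancel₀ hrpos.ne']
  have hψe1 : (inner ℂ ψ e1 : ℂ) = 0 := by rw [he1, inner_smul_right, hψv, mul_zero]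
  obtain ⟨B, hB0, hB1⟩ := exists_onb_ext hd hψ he1norm hψe1
  have hφB : φ = a • B k0 + ((r : ℝ) : ℂ) • B k1 := by
    rw [hB0, hB1, he1, smul_smul, mul_inv_cancel₀ hrC, one_smul, ← hdecomp]
  -- the primitive root and its properties
  obtain ⟨ζ, hζ⟩ : ∃ ζ : ℂ, IsPrimitiveRoot ζ d :=
    ⟨_, Complex.isPrimitiveRoot_exp d (by omega)⟩
  have hζ1 : ζ ^ d = 1 := hζ.pow_eq_one
  have hζ0 : ζ ≠ 0 := by
    intro h; rw [h, zero_pow (by omega : d ≠ 0)] at hζ1; exact zero_ne_one hζ1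
  have hζnorm : ‖ζ‖ = 1 := by
    have h : ‖ζ‖ ^ d = 1 := by rw [← norm_pow, hζ1, norm_one]
    rcases (pow_eq_one_iff_cases.mp h) with h' | h' | h'
    · omega
    · exact h'
    · nlinarith [norm_nonneg ζ, h'.1]
  have hζu : ∀ n : ℕ, (starRingEnd ℂ) (ζ ^ n) * ζ ^ n = 1 := by
    intro n
    rw [RCLike.conj_mul, norm_pow, hζnorm, one_pow]
    norm_num
  -- the flat basis b
  set sd : ℂ := ((Real.sqrt d : ℝ) : ℂ) with hsd
  have hsdR : (0 : ℝ) < Real.sqrt d := Real.sqrt_pos.mpr hd0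
  have hsd0 : sd ≠ 0 := Complex.ofReal_ne_zero.mpr hsdR.ne'
  set f : Fin d → EuclideanSpace ℂ (Fin d) :=
    fun j => ∑ k : Fin d, (sd⁻¹ * ζ ^ (j.val * k.val)) • B k with hf
  have hforth : Orthonormal ℂ f := fourier_orthonormal hd hζ B
  obtain ⟨b, hb⟩ := (hforth.comp _ Subtype.val_injective :
      Orthonormal ℂ ((Set.univ : Set (Fin d)).restrict f)
    ).exists_orthonormalBasis_extension_of_card_eq (by simp)
  have hbj : ∀ j, b j = f j := fun j => hb j (Set.mem_univ j)
  -- the coefficients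
  set t' : ℂ := -a / ((d : ℂ) - 1) with ht'
  have hdC : ((d : ℂ) - 1) ≠ 0 := by
    intro h
    rw [sub_eq_zero] at h
    exact (by omega : d ≠ 1) (by exact_mod_cast h)
  set s : ℝ := Real.sqrt (1 - ‖a‖ ^ 2 * d / ((d : ℝ) - 1)) with hs
  have hsnn : 0 ≤ 1 - ‖a‖ ^ 2 * d / ((d : ℝ) - 1) := by
    rw [sub_nonneg, div_le_one hd1']
    have := (le_div_iff₀ hd0).mp hA2
    linarith
  have hs2 : s ^ 2 = 1 - ‖a‖ ^ 2 * d / ((d : ℝ) - 1) := Real.sq_sqrt hsnn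
  set s' : ℂ := ((s / Real.sqrt 2 : ℝ) : ℂ) with hs'
  set g : Fin d → ℂ := fun k =>
    if k = k0 then 0 else if k = k1 then t' + s' else if k = k2 then t' - s' else t' with hg
  have hgeq : ∀ k, g k = t' + (if k = k0 then -t' else 0) + (if k = k1 then s' else 0)
      + (if k = k2 then -s' else 0) := by
    intro k
    rcases eq_or_ne k k0 with h0 | h0
    · subst h0; simp [hg, h01, h02]; try ring
    rcases eq_or_ne k k1 with h1 | h1
    · subst h1; simp [hg, h0, h12]; try ring
    rcases eq_or_ne k k2 with h2 | h2
    · subst h2; simp [hg, h0, h1]; try ring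
    · simp [hg, h0, h1, h2]; try ring
  have hgsum : ∑ k : Fin d, g k = -a := by
    rw [Finset.sum_congr rfl fun k _ => hgeq k]
    simp only [Finset.sum_add_distrib, Finset.sum_const, Finset.card_univ, Fintype.card_fin,
      Finset.sum_ite_eq', Finset.mem_univ, if_true, nsmul_eq_mul]
    rw [ht']
    field_simp
    ring
  have hpar : ‖t' + s'‖ ^ 2 + ‖t' - s'‖ ^ 2 = 2 * ‖t'‖ ^ 2 + 2 * ‖s'‖ ^ 2 := by
    have := parallelogram_law_with_norm ℂ t' s'
    nlinarith [this]
  have ht'norm : ‖t'‖ ^ 2 = ‖a‖ ^ 2 / ((d : ℝ) - 1) ^ 2 := by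
    rw [ht', norm_div, norm_neg]
    rw [div_pow]
    congr 1
    have : ((d : ℂ) - 1) = (((d : ℝ) - 1 : ℝ) : ℂ) := by push_cast; ring
    rw [this, Complex.norm_real, Real.norm_eq_abs, abs_of_pos hd1']
  have hs'norm : ‖s'‖ ^ 2 = s ^ 2 / 2 := by
    rw [hs', Complex.norm_real, Real.norm_eq_abs, sq_abs, div_pow, Real.sq_sqrt (by norm_num : (0:ℝ) ≤ 2)]
  have hgnormsum : ∑ k : Fin d, ‖g k‖ ^ 2 = 1 - ‖a‖ ^ 2 := by
    have hneq : ∀ k, ‖g k‖ ^ 2 = ‖t'‖ ^ 2 + (if k = k0 then -‖t'‖ ^ 2 else 0)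
        + (if k = k1 then ‖t' + s'‖ ^ 2 - ‖t'‖ ^ 2 else 0)
        + (if k = k2 then ‖t' - s'‖ ^ 2 - ‖t'‖ ^ 2 else 0) := by
      intro k
      rcases eq_or_ne k k0 with h0 | h0
      · subst h0; simp [hg, h01, h02]; try ring
      rcases eq_or_ne k k1 with h1 | h1
      · subst h1; simp [hg, h0, h12]; try ring
      rcases eq_or_ne k k2 with h2 | h2
      · subst h2; simp [hg, h0, h1]; try ring
      · simp [hg, h0, h1, h2]; try ring
    rw [Finset.sum_congr rfl fun k _ => hneq k]
    simp only [Finset.sum_add_distrib, Finset.sum_const, Finset.card_univ, Fintype.card_fin,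
      Finset.sum_ite_eq', Finset.mem_univ, if_true, nsmul_eq_mul]
    have hre : ∀ X P M : ℝ, (d:ℝ) * X + -X + (P - X) + (M - X)
        = (d:ℝ) * X - 3 * X + (P + M) := by intros; ring
    rw [hre, hpar, ht'norm, hs'norm, hs2]
    field_simp
    ring
  -- the vectors w j
  set w : Fin d → EuclideanSpace ℂ (Fin d) :=
    fun j => ∑ k : Fin d, (ζ ^ (j.val * k.val) * g k) • B k with hw
  have hwnorm2 : ∀ j, ‖w j‖ ^ 2 = r ^ 2 := by
    intro j
    rw [hw, norm_sq_sum_smul, hr2]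
    rw [← hgnormsum]
    refine Finset.sum_congr rfl fun k _ => ?_
    rw [norm_mul, norm_pow, hζnorm, one_pow, one_mul]
  have hwnorm : ∀ j, ‖w j‖ = r := by
    intro j
    have := hwnorm2 j
    nlinarith [norm_nonneg (w j), hrpos]
  have hψw : ∀ j, (inner ℂ ψ (w j) : ℂ) = 0 := by
    intro j
    rw [hw, ← hB0]
    rw [B.orthonormal.inner_right_fintype]
    simp [hg, hk0]
  -- the bases B' j and the unitaries
  have hB' : ∀ j, ∃ B' : OrthonormalBasis (Fin d) ℂ (EuclideanSpace ℂ (Fin d)),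
      B' k0 = ψ ∧ B' k1 = ((r : ℝ) : ℂ)⁻¹ • w j := by
    intro j
    refine exists_onb_ext hd hψ ?_ ?_
    · rw [norm_smul, norm_inv, Complex.norm_real, Real.norm_eq_abs, abs_of_pos hrpos, hwnorm j,
        inv_mul_cancel₀ hrpos.ne']
    · rw [inner_smul_right, hψw j, mul_zero]
  choose B' hB'0 hB'1 using hB'
  set U : Fin d → (EuclideanSpace ℂ (Fin d) ≃ₗᵢ[ℂ] EuclideanSpace ℂ (Fin d)) :=
    fun j => B.repr.trans (B' j).repr.symm with hU
  have hUB : ∀ j i, U j (B i) = B' j i := by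
    intro j i
    rw [hU]
    simp only [LinearIsometryEquiv.trans_apply]
    rw [B.repr_self, (B' j).repr_symm_single]
  have hUψ : ∀ j, U j ψ = ψ := by
    intro j
    rw [← hB0, hUB, hB'0, hB0]
  have hUφ : ∀ j, U j φ = a • ψ + w j := by
    intro j
    rw [hφB, map_add, LinearIsometryEquiv.map_smul, LinearIsometryEquiv.map_smul,
      hUB, hUB, hB'0, hB'1, smul_smul, mul_inv_cancel₀ hrC, one_smul]
  refine ⟨U, b, hUψ, fun j => ?_⟩
  rw [hUφ j, hbj j, inner_add_right, inner_smul_right]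
  have hfψ : (inner ℂ (f j) ψ : ℂ) = (starRingEnd ℂ) (sd⁻¹ * ζ ^ (j.val * k0.val)) := by
    rw [hf, ← hB0]
    exact B.orthonormal.inner_left_fintype _ _
  have hfψ' : (inner ℂ (f j) ψ : ℂ) = sd⁻¹ := by
    rw [hfψ, hk0]
    simp only [mul_zero, pow_zero, mul_one, map_inv₀]
    rw [hsd, Complex.conj_ofReal]
  have hfw : (inner ℂ (f j) (w j) : ℂ) = sd⁻¹ * (-a) := by
    rw [hf, hw, B.orthonormal.inner_sum]
    have hterm : ∀ k : Fin d, (starRingEnd ℂ) (sd⁻¹ * ζ ^ (j.val * k.val))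
        * (ζ ^ (j.val * k.val) * g k) = sd⁻¹ * g k := by
      intro k
      have h1 := hζu (j.val * k.val)
      have hconjsd : (starRingEnd ℂ) sd⁻¹ = sd⁻¹ := by
        rw [map_inv₀, hsd, Complex.conj_ofReal]
      rw [map_mul, hconjsd, show sd⁻¹ * (starRingEnd ℂ) (ζ ^ (j.val * k.val))
          * (ζ ^ (j.val * k.val) * g k)
        = sd⁻¹ * ((starRingEnd ℂ) (ζ ^ (j.val * k.val)) * ζ ^ (j.val * k.val)) * g k
        from by ring, h1, mul_one]
    rw [Finset.sum_congr rfl fun k _ => hterm k, ← Finset.mul_sum, hgsum]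
  rw [hfψ', hfw]
  ring
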